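/- Let p, q be orthogonal projections in M_n(ℂ) and let r be the orthogonal projection onto (range p) ∩ (range q). If x ∈ M_n(ℂ) satisfies 0 ≤ x ≤ p and 0 ≤ x ≤ q, then x ≤ r. In particular, r is the greatest lower bound of p and q within the set {y : 0 ≤ y ≤ 1}. -/

import Mathlib

open Matrix
open scoped ComplexOrder

private lemma herm_idem_psd {n : ℕ} {p : Matrix (Fin n) (Fin n) ℂ}
    (hp : p.IsHermitian) (hp2 : p * p = p) : p.PosSemidef := by
  have := posSemidef_conjTranspose_mul_self p
  rwa [hp.eq, hp2] at this

private lemma ext_mulVec {n : ℕ} {A B : Matrix (Fin n) (Fin n) ℂ}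
    (h : ∀ v, A *ᵥ v = B *ᵥ v) : A = B := by
  ext i j
  simpa [Matrix.mulVec_single] using congrFun (h (Pi.single j 1)) i

private lemma proj_id_on_range {n : ℕ} {p : Matrix (Fin n) (Fin n) ℂ}
    (hp2 : p * p = p) {u : Fin n → ℂ} (hu : u ∈ LinearMap.range p.mulVecLin) :
    p *ᵥ u = u := by
  obtain ⟨w, rfl⟩ := hu
  show p *ᵥ (p *ᵥ w) = _
  rw [Matrix.mulVec_mulVec, hp2]
  rfl

/-- If `0 ≤ x ≤ p` with `p` a hermitian idempotent, then `p * x = x`. -/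
private lemma absorb {n : ℕ} {p x : Matrix (Fin n) (Fin n) ℂ}
    (hp : p.IsHermitian) (hp2 : p * p = p)
    (hx : x.PosSemidef) (hpx : (p - x).PosSemidef) : p * x = x := by
  have hxp : x * (1 - p) = 0 := by
    apply ext_mulVec
    intro v
    rw [Matrix.zero_mulVec, ← Matrix.mulVec_mulVec]
    set w := (1 - p) *ᵥ v with hw
    have hpw : p *ᵥ w = 0 := by
      rw [hw, Matrix.mulVec_mulVec, mul_sub, mul_one, hp2, sub_self, Matrix.zero_mulVec]
    have h1 : (0 : ℂ) ≤ star w ⬝ᵥ x *ᵥ w := hx.dotProduct_mulVec_nonneg w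
    have h2 : (0 : ℂ) ≤ star w ⬝ᵥ (p - x) *ᵥ w := hpx.dotProduct_mulVec_nonneg w
    rw [Matrix.sub_mulVec, dotProduct_sub, hpw, dotProduct_zero, zero_sub,
      le_neg, neg_zero] at h2
    have h0 : star w ⬝ᵥ x *ᵥ w = 0 := le_antisymm h2 h1
    exact (hx.dotProduct_mulVec_zero_iff w).mp h0
  have : x * 1 - x * p = 0 := by rw [← mul_sub]; exact hxp
  have hxp' : x * p = x := by
    rw [mul_one] at this
    linear_combination (norm := abel) -this
  calc p * x = (x * p)ᴴ := by rw [conjTranspose_mul, hp.eq, hx.1.eq]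
    _ = x := by rw [hxp', hx.1.eq]

/-- If `p, q` are orthogonal projections and `r` is the orthogonal
projection onto `range p ∩ range q`, then any `x` with `0 ≤ x ≤ p` and `0 ≤ x ≤ q`
satisfies `x ≤ r`; in particular `r` is the greatest lower bound of `p` and `q`
within `{y : 0 ≤ y ≤ 1}` (Loewner order). -/
theorem stmt_9 (n : ℕ) (p q r : Matrix (Fin n) (Fin n) ℂ)
    (hp : p.IsHermitian) (hp2 : p * p = p)
    (hq : q.IsHermitian) (hq2 : q * q = q)
    (hr : r.IsHermitian) (hr2 : r * r = r)
    (hrange : LinearMap.range r.mulVecLin =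
      LinearMap.range p.mulVecLin ⊓ LinearMap.range q.mulVecLin) :
    (∀ x : Matrix (Fin n) (Fin n) ℂ,
      x.PosSemidef → (p - x).PosSemidef → (q - x).PosSemidef → (r - x).PosSemidef) ∧
    ((p - r).PosSemidef ∧ (q - r).PosSemidef ∧ r.PosSemidef ∧ (1 - r).PosSemidef) := by
  -- `p * r = r` and `q * r = r` since range r ⊆ range p ⊓ range q
  have hpr : p * r = r := by
    apply ext_mulVec; intro v
    rw [← Matrix.mulVec_mulVec]
    apply proj_id_on_range hp2
    have : r *ᵥ v ∈ LinearMap.range r.mulVecLin := ⟨v, rfl⟩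
    rw [hrange] at this
    exact this.1
  have hqr : q * r = r := by
    apply ext_mulVec; intro v
    rw [← Matrix.mulVec_mulVec]
    apply proj_id_on_range hq2
    have : r *ᵥ v ∈ LinearMap.range r.mulVecLin := ⟨v, rfl⟩
    rw [hrange] at this
    exact this.2
  have hrp : r * p = r := by
    calc r * p = (p * r)ᴴ := by rw [conjTranspose_mul, hp.eq, hr.eq]
      _ = r := by rw [hpr, hr.eq]
  have hrq : r * q = r := by
    calc r * q = (q * r)ᴴ := by rw [conjTranspose_mul, hq.eq, hr.eq]
      _ = r := by rw [hqr, hr.eq]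
  have hpr_psd : (p - r).PosSemidef := by
    apply herm_idem_psd (hp.sub hr)
    rw [sub_mul, mul_sub, mul_sub, hp2, hr2, hpr, hrp]
    abel
  have hqr_psd : (q - r).PosSemidef := by
    apply herm_idem_psd (hq.sub hr)
    rw [sub_mul, mul_sub, mul_sub, hq2, hr2, hqr, hrq]
    abel
  have h1p : ((1 : Matrix (Fin n) (Fin n) ℂ) - p).PosSemidef := by
    apply herm_idem_psd (Matrix.isHermitian_one.sub hp)
    rw [sub_mul, one_mul, mul_sub, mul_one, hp2]
    abel
  have h1r : ((1 : Matrix (Fin n) (Fin n) ℂ) - r).PosSemidef := by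
    apply herm_idem_psd (Matrix.isHermitian_one.sub hr)
    rw [sub_mul, one_mul, mul_sub, mul_one, hr2]
    abel
  refine ⟨?_, hpr_psd, hqr_psd, herm_idem_psd hr hr2, h1r⟩
  intro x hx hpx hqx
  have hpx' : p * x = x := absorb hp hp2 hx hpx
  have hqx' : q * x = x := absorb hq hq2 hx hqx
  -- range x ⊆ range r, so r * x = x
  have hrx : r * x = x := by
    apply ext_mulVec; intro v
    rw [← Matrix.mulVec_mulVec]
    apply proj_id_on_range hr2
    rw [hrange]
    constructor
    · exact ⟨x *ᵥ v, by simp [Matrix.mulVecLin_apply, Matrix.mulVec_mulVec, hpx']⟩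
    · exact ⟨x *ᵥ v, by simp [Matrix.mulVecLin_apply, Matrix.mulVec_mulVec, hqx']⟩
  have hxr : x * r = x := by
    calc x * r = (r * x)ᴴ := by rw [conjTranspose_mul, hr.eq, hx.1.eq]
      _ = x := by rw [hrx, hx.1.eq]
  -- 1 - x is PSD
  have h1x : ((1 : Matrix (Fin n) (Fin n) ℂ) - x).PosSemidef := by
    have := h1p.add hpx
    have heq : (1 - p) + (p - x) = (1 : Matrix (Fin n) (Fin n) ℂ) - x := by abel
    rwa [heq] at this
  -- r - x = rᴴ * (1 - x) * rᴴᴴ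
  have key : r * ((1 : Matrix (Fin n) (Fin n) ℂ) - x) * r = r - x := by
    rw [mul_sub, mul_one, sub_mul, hr2, mul_assoc, hxr, hrx]
  have := h1x.mul_mul_conjTranspose_same rᴴ
  rwa [conjTranspose_conjTranspose, hr.eq, key] at this
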